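/- Let G be a (P6, diamond)-free graph containing an induced 5-cycle v1v2v3v4v5, and for each i let A_i be the set of vertices outside the cycle whose only neighbour on the cycle is v_i. Then A_i and A_{i+1} are anti-complete (no edges between them), indices modulo 5. -/

import Mathlib

open SimpleGraph

def diamond : SimpleGraph (Fin 4) := (⊤ : SimpleGraph (Fin 4)).deleteEdges {s(0, 1)}

set_option maxHeartbeats 1000000 in
theorem stmt_2 {V : Type*} (G : SimpleGraph V)
    (hP6 : ¬ Nonempty (pathGraph 6 ↪g G))
    (hD : ¬ Nonempty (diamond ↪g G))
    (v : Fin 5 → V) (hv : Function.Injective v)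
    (hC5 : ∀ i j, G.Adj (v i) (v j) ↔ j = i + 1 ∨ i = j + 1)
    (A : Fin 5 → Set V)
    (hA : ∀ i, A i = {u | u ∉ Set.range v ∧ ∀ j, G.Adj u (v j) ↔ j = i}) :
    ∀ i, ∀ a ∈ A i, ∀ b ∈ A (i + 1), ¬ G.Adj a b := by
  intro i a ha b hb hab
  rw [hA] at ha hb
  obtain ⟨hav, haj⟩ := ha
  obtain ⟨hbv, hbj⟩ := hb
  have hva : ∀ j, a ≠ v j := fun j h => hav ⟨j, h.symm⟩
  have hvb : ∀ j, b ≠ v j := fun j h => hbv ⟨j, h.symm⟩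
  have hne : a ≠ b := G.ne_of_adj hab
  apply hP6
  have h5 : ![v (i+2), v (i+3), v (i+4), v i, a, b] (5 : Fin 6) = b := rfl
  refine ⟨⟨⟨![v (i+2), v (i+3), v (i+4), v i, a, b], ?_⟩, ?_⟩⟩
  · intro x y h
    fin_cases x <;> fin_cases y <;>
      first
      | rfl
      | (simp only [] at h ⊢
         simp +decide [Matrix.cons_val_succ, h5] at h
         first
         | (exfalso; have e := congrArg Fin.val (hv h); simp +decide [Fin.add_def] at e; omega)
         | exact absurd h (hva _)
         | exact absurd h.symm (hva _)
         | exact absurd h (hvb _)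
         | exact absurd h.symm (hvb _)
         | exact absurd h hne
         | exact absurd h.symm hne)
  · intro x y
    fin_cases x <;> fin_cases y <;>
      simp +decide [pathGraph_adj, Matrix.cons_val_succ, h5] <;>
      first
      | exact hab
      | exact hab.symm
      | (refine (hC5 _ _).mpr (Or.inl (Fin.val_injective ?_))
         simp +decide [Fin.add_def]; omega)
      | (refine (hC5 _ _).mpr (Or.inr (Fin.val_injective ?_))
         simp +decide [Fin.add_def]; omega)
      | exact (haj _).mpr rfl
      | exact ((haj _).mpr rfl).symm
      | (intro h
         rcases (hC5 _ _).mp h with e | e <;>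
           (apply_fun Fin.val at e; simp [Fin.add_def] at e; omega))
      | (intro h
         have e := (haj _).mp h
         apply_fun Fin.val at e; simp [Fin.add_def] at e; omega)
      | (intro h
         have e := (haj _).mp h.symm
         apply_fun Fin.val at e; simp [Fin.add_def] at e; omega)
      | (intro h
         have e := (hbj _).mp h
         apply_fun Fin.val at e; simp [Fin.add_def] at e; omega)
      | (intro h
         have e := (hbj _).mp h.symm
         apply_fun Fin.val at e; simp [Fin.add_def] at e; omega)
      | (show G.Adj (v _) (v _)
         first
         | (refine (hC5 _ _).mpr (Or.inl (Fin.val_injective ?_))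
            simp +decide [Fin.add_def] <;> omega)
         | (refine (hC5 _ _).mpr (Or.inr (Fin.val_injective ?_))
            simp +decide [Fin.add_def] <;> omega))
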